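/- Let 0 < β be a real number, let S and S₀ be C¹ survival functions on [0,β] with S(0) = S₀(0) = 1, with densities f := −S', f₀ := −S₀' and hazard rates λ := −S'/S, λ₀ := −S₀'/S₀, and let φ : ℝ → ℝ be continuously differentiable on [0,β]. Then ∫₀^β φ(y)(f(y) − f₀(y)) dy + φ(β)(S(β) − S₀(β)) = −∫₀^β L_S(y) · (S₀(y)/S(y)) · (λ(y) − λ₀(y)) dy, where L_S(y) := ∫_y^β S(u) φ'(u) du. (Lemma 1(a), differentiable case with boundary term accounting for the constancy of φ beyond β.) -/

import Mathlib

open Set intervalIntegral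
open MeasureTheory

/-- Lemma 1(a), differentiable case: with densities `f = -S'`, `f₀ = -S₀'` and hazard rates
`λ = -S'/S`, `λ₀ = -S₀'/S₀`, and `L_S y = ∫_y^β S u * φ' u du`,
`∫₀^β φ (f - f₀) + φ β (S β - S₀ β) = -∫₀^β L_S y (S₀ y / S y)(λ y - λ₀ y) dy`. -/
theorem survival_integral_linearization
    (β : ℝ) (hβ : 0 < β)
    (S S' S₀ S₀' φ φ' : ℝ → ℝ)
    (hS : ∀ y ∈ Icc (0:ℝ) β, HasDerivAt S (S' y) y)
    (hS' : ContinuousOn S' (Icc 0 β))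
    (hSmono : AntitoneOn S (Icc 0 β))
    (hSpos : ∀ y ∈ Icc (0:ℝ) β, 0 < S y ∧ S y ≤ 1)
    (hS₀ : ∀ y ∈ Icc (0:ℝ) β, HasDerivAt S₀ (S₀' y) y)
    (hS₀' : ContinuousOn S₀' (Icc 0 β))
    (hS₀mono : AntitoneOn S₀ (Icc 0 β))
    (hS₀pos : ∀ y ∈ Icc (0:ℝ) β, 0 < S₀ y ∧ S₀ y ≤ 1)
    (hS0 : S 0 = 1) (hS₀0 : S₀ 0 = 1)
    (hφ : ∀ y ∈ Icc (0:ℝ) β, HasDerivAt φ (φ' y) y)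
    (hφ' : ContinuousOn φ' (Icc 0 β)) :
    (∫ y in (0:ℝ)..β, φ y * ((-(S' y)) - (-(S₀' y))))
        + φ β * (S β - S₀ β)
      = -∫ y in (0:ℝ)..β,
          (∫ u in y..β, S u * φ' u) * (S₀ y / S y)
            * ((-(S' y) / S y) - (-(S₀' y) / S₀ y)) := by
  have hβ' : (0:ℝ) ≤ β := hβ.le
  have hIcc : uIcc (0:ℝ) β = Icc 0 β := uIcc_of_le hβ'
  have h0mem : (0:ℝ) ∈ Icc (0:ℝ) β := ⟨le_refl _, hβ'⟩
  have hβmem : β ∈ Icc (0:ℝ) β := ⟨hβ', le_refl _⟩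
  -- continuity
  have hScont : ContinuousOn S (Icc 0 β) := fun y hy =>
    (hS y hy).continuousAt.continuousWithinAt
  have hS₀cont : ContinuousOn S₀ (Icc 0 β) := fun y hy =>
    (hS₀ y hy).continuousAt.continuousWithinAt
  -- the extension h of S * φ'
  set g : ℝ → ℝ := fun u => S u * φ' u with hg
  have hgcont : ContinuousOn g (Icc 0 β) := hScont.mul hφ'
  set h : ℝ → ℝ := IccExtend hβ' ((Icc (0:ℝ) β).restrict g) with hhdef
  have hhcont : Continuous h := hgcont.restrict.Icc_extend'
  have hheq : ∀ y ∈ Icc (0:ℝ) β, h y = g y := fun y hy => by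
    simp only [hhdef, IccExtend_of_mem hβ' _ hy, restrict_apply]
    rfl
  -- LHS by parts
  have hint1 : IntervalIntegrable (fun y => S₀' y - S' y) volume 0 β :=
    ((hS₀'.sub hS').mono (by rw [hIcc])).intervalIntegrable
  have hint2 : IntervalIntegrable φ' volume 0 β :=
    (hφ'.mono (by rw [hIcc])).intervalIntegrable
  have lhs_parts : (∫ y in (0:ℝ)..β, φ y * ((-(S' y)) - (-(S₀' y))))
      + φ β * (S β - S₀ β) = ∫ y in (0:ℝ)..β, φ' y * (S y - S₀ y) := by
    have h1 : (∫ y in (0:ℝ)..β, φ y * ((-(S' y)) - (-(S₀' y))))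
        = ∫ y in (0:ℝ)..β, φ y * (S₀' y - S' y) := by
      apply integral_congr; intro y _; ring_nf
    have h2 := integral_mul_deriv_eq_deriv_mul
      (u := φ) (v := fun y => S₀ y - S y) (u' := φ') (v' := fun y => S₀' y - S' y)
      (a := 0) (b := β)
      (fun x hx => hφ x (hIcc ▸ hx))
      (fun x hx => (hS₀ x (hIcc ▸ hx)).sub (hS x (hIcc ▸ hx)))
      hint2 hint1
    rw [h1, h2]
    simp only [hS0, hS₀0]
    rw [show (∫ y in (0:ℝ)..β, φ' y * (S₀ y - S y))
        = -∫ y in (0:ℝ)..β, φ' y * (S y - S₀ y) by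
      rw [← intervalIntegral.integral_neg]; apply integral_congr; intro y _; dsimp only; ring]
    ring
  rw [lhs_parts]
  -- RHS: G, r
  set G : ℝ → ℝ := fun y => ∫ u in y..β, h u with hGdef
  have hGderiv : ∀ y : ℝ, HasDerivAt G (-h y) y := by
    intro y
    have : HasDerivAt (fun y => ∫ u in β..y, h u) (h y) y :=
      integral_hasDerivAt_right (hhcont.intervalIntegrable _ _)
        (hhcont.stronglyMeasurable.stronglyMeasurableAtFilter) hhcont.continuousAt
    have hGalt : G = fun y => -∫ u in β..y, h u := by
      funext z; exact integral_symm β z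
    rw [hGalt]
    exact this.neg
  set r : ℝ → ℝ := fun y => S₀ y / S y with hrdef
  have hSne : ∀ y ∈ Icc (0:ℝ) β, S y ≠ 0 := fun y hy => (hSpos y hy).1.ne'
  have hS₀ne : ∀ y ∈ Icc (0:ℝ) β, S₀ y ≠ 0 := fun y hy => (hS₀pos y hy).1.ne'
  have hrderiv : ∀ y ∈ Icc (0:ℝ) β,
      HasDerivAt r ((S₀' y * S y - S₀ y * S' y) / (S y)^2) y := fun y hy =>
    (hS₀ y hy).div (hS y hy) (hSne y hy)
  -- rewrite RHS integrand
  have hrhs : (∫ y in (0:ℝ)..β,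
      (∫ u in y..β, S u * φ' u) * (S₀ y / S y)
        * ((-(S' y) / S y) - (-(S₀' y) / S₀ y)))
      = ∫ y in (0:ℝ)..β, G y * ((S₀' y * S y - S₀ y * S' y) / (S y)^2) := by
    apply integral_congr
    intro y hy
    dsimp only
    rw [hIcc] at hy
    have hGy : G y = ∫ u in y..β, S u * φ' u := by
      apply integral_congr
      intro u hu
      rw [uIcc_of_le hy.2] at hu
      exact hheq u ⟨hy.1.trans hu.1, hu.2⟩
    rw [← hGy]
    have h1 : S y ≠ 0 := hSne y hy
    have h2 : S₀ y ≠ 0 := hS₀ne y hy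
    field_simp
    ring
  rw [hrhs]
  -- integrate by parts on RHS
  have hintG : IntervalIntegrable (fun y => -h y) volume 0 β :=
    (hhcont.neg.intervalIntegrable _ _)
  have hintr' : IntervalIntegrable
      (fun y => (S₀' y * S y - S₀ y * S' y) / (S y)^2) volume 0 β := by
    apply ContinuousOn.intervalIntegrable
    rw [hIcc]
    exact ((hS₀'.mul hScont).sub (hS₀cont.mul hS')).div (hScont.pow 2)
      (fun y hy => pow_ne_zero 2 (hSne y hy))
  have h3 := integral_mul_deriv_eq_deriv_mul
    (u := G) (v := r) (u' := fun y => -h y)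
    (v' := fun y => (S₀' y * S y - S₀ y * S' y) / (S y)^2)
    (a := 0) (b := β)
    (fun x _ => hGderiv x)
    (fun x hx => hrderiv x (hIcc ▸ hx))
    hintG hintr'
  rw [h3]
  have hGβ : G β = 0 := integral_same
  have hr0 : r 0 = 1 := by simp [hrdef, hS0, hS₀0]
  have hG0 : G 0 = ∫ u in (0:ℝ)..β, S u * φ' u := by
    apply integral_congr
    intro u hu
    exact hheq u (hIcc ▸ hu)
  have hlast : (∫ y in (0:ℝ)..β, (-h y) * r y)
      = -∫ y in (0:ℝ)..β, φ' y * S₀ y := by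
    rw [← intervalIntegral.integral_neg]
    apply integral_congr
    intro y hy
    dsimp only
    rw [hIcc] at hy
    rw [hheq y hy]
    have h1 : S y ≠ 0 := hSne y hy
    simp only [hg, hrdef]
    field_simp
  rw [hGβ, hr0, hG0, hlast]
  have hintSφ' : IntervalIntegrable (fun u => S u * φ' u) volume 0 β :=
    (hgcont.mono (by rw [hIcc])).intervalIntegrable
  have hintφ'S₀ : IntervalIntegrable (fun y => φ' y * S₀ y) volume 0 β :=
    ((hφ'.mul hS₀cont).mono (by rw [hIcc])).intervalIntegrable
  rw [show (∫ y in (0:ℝ)..β, φ' y * (S y - S₀ y))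
      = (∫ u in (0:ℝ)..β, S u * φ' u) - ∫ y in (0:ℝ)..β, φ' y * S₀ y by
    rw [← integral_sub hintSφ' hintφ'S₀]
    apply integral_congr; intro y _; ring]
  ring
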